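/- Classify valid RVT words by their last letter and count with multiplicity: for k ≥ 1 let r_k, v_k, t_k, l_k, s_k denote the number of valid words of length k ending in R, in V, in T₁, in one of L₁/L₂/L₃, and in T₂, respectively. Then the counts satisfy the recurrences r_(k+1) = v_(k+1) = r_k + v_k + t_k + l_k + s_k, t_(k+1) = v_k + t_k + l_k, l_(k+1) = v_k + t_k + 3·l_k + s_k, s_(k+1) = l_k + s_k, with initial values (r₁, v₁, t₁, l₁, s₁) = (1, 0, 0, 0, 0). -/

import Mathlib

inductive RVT : Type
  | R | V | T1 | T2 | L1 | L2 | L3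
  deriving DecidableEq, Repr

open RVT in
/-- The successor (spelling) relation of the RVT coding system. -/
def RVT.succs : RVT → List RVT
  | R => [R, V]
  | V => [R, V, T1, L1]
  | T1 => [R, V, T1, L1]
  | T2 => [R, V, T2, L3]
  | L1 => [R, V, T1, T2, L1, L2, L3]
  | L2 => [R, V, T1, T2, L1, L2, L3]
  | L3 => [R, V, T1, T2, L1, L2, L3]

/-- A word is a valid RVT code if it starts with `R` and each letter is a
legal successor of the previous one. -/
def ValidRVT (w : List RVT) : Prop :=
  w.head? = some RVT.R ∧ List.Chain' (fun a b => b ∈ a.succs) w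

/-- Number of valid RVT words of length `k` whose last letter satisfies `P`. -/
noncomputable def validCountEnd (k : ℕ) (P : RVT → Prop) : ℕ :=
  Nat.card {w : List RVT // ValidRVT w ∧ w.length = k ∧
    ∃ a, w.getLast? = some a ∧ P a}

noncomputable def rCount (k : ℕ) : ℕ := validCountEnd k (· = RVT.R)
noncomputable def vCount (k : ℕ) : ℕ := validCountEnd k (· = RVT.V)
noncomputable def tCount (k : ℕ) : ℕ := validCountEnd k (· = RVT.T1)
noncomputable def lCount (k : ℕ) : ℕ :=
  validCountEnd k (fun a => a = RVT.L1 ∨ a = RVT.L2 ∨ a = RVT.L3)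
noncomputable def sCount (k : ℕ) : ℕ := validCountEnd k (· = RVT.T2)

-- Auxiliary material

instance : Fintype RVT :=
  ⟨⟨{.R, .V, .T1, .T2, .L1, .L2, .L3}, by decide⟩, fun x => by cases x <;> decide⟩

instance rvtFinite (k : ℕ) (P : RVT → Prop) :
    Finite {w : List RVT // ValidRVT w ∧ w.length = k ∧
      ∃ a, w.getLast? = some a ∧ P a} := by
  have h := (List.finite_length_eq RVT k).to_subtype
  exact Finite.of_injective
    (fun x => (⟨x.1, x.2.2.1⟩ : {l : List RVT // l ∈ {l : List RVT | l.length = k}}))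
    fun x y h => Subtype.ext (by simpa [Subtype.ext_iff] using h)

lemma validCountEnd_congr (k : ℕ) {P Q : RVT → Prop} (h : ∀ a, P a ↔ Q a) :
    validCountEnd k P = validCountEnd k Q :=
  Nat.card_congr (Equiv.subtypeEquivRight fun w => by
    simp only [and_congr_right_iff]
    exact fun _ _ => exists_congr fun a => and_congr_right fun _ => h a)

lemma validCountEnd_add (k : ℕ) (P Q : RVT → Prop) (h : ∀ a, ¬(P a ∧ Q a)) :
    validCountEnd k (fun a => P a ∨ Q a) = validCountEnd k P + validCountEnd k Q := by
  classical
  rw [validCountEnd, validCountEnd, validCountEnd, ← Nat.card_sum]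
  refine Nat.card_congr ?_
  refine (Equiv.subtypeEquivRight fun w => ?_).trans
    (subtypeOrEquiv
      (fun w : List RVT => ValidRVT w ∧ w.length = k ∧ ∃ a, w.getLast? = some a ∧ P a)
      (fun w : List RVT => ValidRVT w ∧ w.length = k ∧ ∃ a, w.getLast? = some a ∧ Q a) ?_)
  · constructor
    · rintro ⟨h1, h2, a, ha, hPQ⟩
      rcases hPQ with hP | hQ
      · exact Or.inl ⟨h1, h2, a, ha, hP⟩
      · exact Or.inr ⟨h1, h2, a, ha, hQ⟩
    · rintro (⟨h1, h2, a, ha, hP⟩ | ⟨h1, h2, a, ha, hQ⟩)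
      · exact ⟨h1, h2, a, ha, Or.inl hP⟩
      · exact ⟨h1, h2, a, ha, Or.inr hQ⟩
  · intro p hp hq w hw
    obtain ⟨_, _, a, ha, hP⟩ := hp w hw
    obtain ⟨_, _, c, hc, hQ⟩ := hq w hw
    rw [ha] at hc
    exact h a ⟨hP, Option.some.inj hc ▸ hQ⟩

lemma validCountEnd_step (k : ℕ) (hk : 1 ≤ k) (b : RVT) :
    validCountEnd (k + 1) (· = b) = validCountEnd k (fun a => b ∈ a.succs) := by
  have hmain : ∀ w : List RVT,
      (ValidRVT w ∧ w.length = k ∧ ∃ a, w.getLast? = some a ∧ b ∈ a.succs) →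
      (ValidRVT (w ++ [b]) ∧ (w ++ [b]).length = k + 1 ∧
        ∃ c, (w ++ [b]).getLast? = some c ∧ c = b) := by
    rintro w ⟨⟨hhead, hchain⟩, hlen, a, ha, hb⟩
    have hne : w ≠ [] := by rintro rfl; simp at ha
    refine ⟨⟨?_, ?_⟩, by simp [hlen], b, List.getLast?_concat, rfl⟩
    · rw [List.head?_append, hhead]; rfl
    · rw [List.Chain', List.isChain_append]
      refine ⟨hchain, List.isChain_singleton b, ?_⟩
      intro x hx y hy
      rw [ha] at hx
      simp only [List.head?_cons, Option.mem_def, Option.some.injEq] at hx hy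
      subst hx; subst hy; exact hb
  refine (Nat.card_eq_of_bijective
    (fun x => ⟨x.1 ++ [b], hmain x.1 x.2⟩) ⟨?_, ?_⟩).symm
  · intro x y hxy
    apply Subtype.ext
    have : x.1 ++ [b] = y.1 ++ [b] := by simpa [Subtype.ext_iff] using hxy
    simpa using this
  · rintro ⟨w, ⟨hhead, hchain⟩, hlen, c, hc, rfl⟩
    have hne : w ≠ [] := by rintro rfl; simp at hlen
    have hdecomp : w.dropLast ++ [w.getLast hne] = w := List.dropLast_append_getLast hne
    have hcb : w.getLast hne = c := by
      have := List.getLast?_eq_getLast hne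
      rw [hc] at this; exact (Option.some.inj this).symm
    have hdne : w.dropLast ≠ [] := by
      intro h
      have : w.length = 1 := by
        have := congrArg List.length hdecomp
        simp [h] at this; omega
      omega
    have hch : List.Chain' (fun a b => b ∈ a.succs) (w.dropLast ++ [w.getLast hne]) := by
      rw [hdecomp]; exact hchain
    rw [List.Chain', List.isChain_append] at hch
    obtain ⟨hch1, _, hch3⟩ := hch
    obtain ⟨a, ha⟩ : ∃ a, w.dropLast.getLast? = some a := by
      cases h : w.dropLast.getLast? with
      | none => exact absurd (List.getLast?_eq_none_iff.mp h) hdne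
      | some a => exact ⟨a, rfl⟩
    refine ⟨⟨w.dropLast, ⟨?_, hch1⟩, ?_, a, ha, ?_⟩, ?_⟩
    · have := List.head?_append (l := w.dropLast) (l' := [w.getLast hne])
      rw [hdecomp] at this
      rw [← hhead, this]
      cases h : w.dropLast.head? with
      | none => exact absurd (List.head?_eq_none_iff.mp h) hdne
      | some x => rfl
    · rw [List.length_dropLast, hlen]; omega
    · have := hch3 a ha (w.getLast hne) (by simp)
      rwa [hcb] at this
    · apply Subtype.ext
      simp only
      rw [hcb] at hdecomp
      exact hdecomp

lemma validCountEnd_one_pos (P : RVT → Prop) (h : P RVT.R) : validCountEnd 1 P = 1 := by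
  rw [validCountEnd]
  haveI : Unique {w : List RVT // ValidRVT w ∧ w.length = 1 ∧
      ∃ a, w.getLast? = some a ∧ P a} := by
    refine ⟨⟨⟨[RVT.R], ⟨rfl, List.isChain_singleton _⟩, rfl, RVT.R, rfl, h⟩⟩, ?_⟩
    rintro ⟨w, ⟨hh, _⟩, hl, _⟩
    obtain ⟨c, rfl⟩ := List.length_eq_one_iff.mp hl
    simp only [List.head?_cons, Option.some.injEq] at hh
    subst hh
    rfl
  exact Nat.card_unique

lemma validCountEnd_one_neg (P : RVT → Prop) (h : ¬ P RVT.R) : validCountEnd 1 P = 0 := by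
  rw [validCountEnd]
  haveI : IsEmpty {w : List RVT // ValidRVT w ∧ w.length = 1 ∧
      ∃ a, w.getLast? = some a ∧ P a} := by
    refine ⟨?_⟩
    rintro ⟨w, ⟨hh, _⟩, hl, a, ha, hP⟩
    obtain ⟨c, rfl⟩ := List.length_eq_one_iff.mp hl
    simp only [List.head?_cons, Option.some.injEq] at hh
    subst hh
    simp only [List.getLast?_singleton, Option.some.injEq] at ha
    subst ha
    exact h hP
  exact Nat.card_of_isEmpty

theorem last_letter_recurrences :
    (rCount 1 = 1 ∧ vCount 1 = 0 ∧ tCount 1 = 0 ∧ lCount 1 = 0 ∧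
      sCount 1 = 0) ∧
    ∀ k : ℕ, 1 ≤ k →
      rCount (k + 1) = rCount k + vCount k + tCount k + lCount k + sCount k ∧
      vCount (k + 1) = rCount k + vCount k + tCount k + lCount k + sCount k ∧
      tCount (k + 1) = vCount k + tCount k + lCount k ∧
      lCount (k + 1) = vCount k + tCount k + 3 * lCount k + sCount k ∧
      sCount (k + 1) = lCount k + sCount k := by
  constructor
  · refine ⟨validCountEnd_one_pos _ rfl, validCountEnd_one_neg _ (by decide),
      validCountEnd_one_neg _ (by decide), validCountEnd_one_neg _ (by decide),
      validCountEnd_one_neg _ (by decide)⟩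
  · intro k hk
    set L : RVT → Prop := fun a => a = RVT.L1 ∨ a = RVT.L2 ∨ a = RVT.L3 with hL
    have hall : ∀ b : RVT, validCountEnd (k+1) (· = b) =
        validCountEnd k (fun a => b ∈ a.succs) := validCountEnd_step k hk
    have hR : rCount (k+1) = rCount k + (vCount k + (tCount k + (lCount k + sCount k))) := by
      rw [rCount, hall,
        validCountEnd_congr k (Q := fun a => a = RVT.R ∨ (a = RVT.V ∨ (a = RVT.T1 ∨
          ((a = RVT.L1 ∨ a = RVT.L2 ∨ a = RVT.L3) ∨ a = RVT.T2)))) (by decide),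
        validCountEnd_add k _ _ (by decide), validCountEnd_add k _ _ (by decide),
        validCountEnd_add k _ _ (by decide), validCountEnd_add k _ _ (by decide)]
      rfl
    have hV : vCount (k+1) = rCount k + (vCount k + (tCount k + (lCount k + sCount k))) := by
      rw [vCount, hall,
        validCountEnd_congr k (Q := fun a => a = RVT.R ∨ (a = RVT.V ∨ (a = RVT.T1 ∨
          ((a = RVT.L1 ∨ a = RVT.L2 ∨ a = RVT.L3) ∨ a = RVT.T2)))) (by decide),
        validCountEnd_add k _ _ (by decide), validCountEnd_add k _ _ (by decide),
        validCountEnd_add k _ _ (by decide), validCountEnd_add k _ _ (by decide)]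
      rfl
    have hT : tCount (k+1) = vCount k + (tCount k + lCount k) := by
      rw [tCount, hall,
        validCountEnd_congr k (Q := fun a => a = RVT.V ∨ (a = RVT.T1 ∨
          (a = RVT.L1 ∨ a = RVT.L2 ∨ a = RVT.L3))) (by decide),
        validCountEnd_add k _ _ (by decide), validCountEnd_add k _ _ (by decide)]
      rfl
    have hS : sCount (k+1) = sCount k + lCount k := by
      rw [sCount, hall,
        validCountEnd_congr k (Q := fun a => a = RVT.T2 ∨
          (a = RVT.L1 ∨ a = RVT.L2 ∨ a = RVT.L3)) (by decide),
        validCountEnd_add k _ _ (by decide)]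
      rfl
    have hL1 : validCountEnd (k+1) (· = RVT.L1) = vCount k + (tCount k + lCount k) := by
      rw [hall,
        validCountEnd_congr k (Q := fun a => a = RVT.V ∨ (a = RVT.T1 ∨
          (a = RVT.L1 ∨ a = RVT.L2 ∨ a = RVT.L3))) (by decide),
        validCountEnd_add k _ _ (by decide), validCountEnd_add k _ _ (by decide)]
      rfl
    have hL2 : validCountEnd (k+1) (· = RVT.L2) = lCount k := by
      rw [hall,
        validCountEnd_congr k
          (Q := fun a => a = RVT.L1 ∨ a = RVT.L2 ∨ a = RVT.L3) (by decide)]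
      rfl
    have hL3 : validCountEnd (k+1) (· = RVT.L3) = sCount k + lCount k := by
      rw [hall,
        validCountEnd_congr k (Q := fun a => a = RVT.T2 ∨
          (a = RVT.L1 ∨ a = RVT.L2 ∨ a = RVT.L3)) (by decide),
        validCountEnd_add k _ _ (by decide)]
      rfl
    have hLtot : lCount (k+1) = validCountEnd (k+1) (· = RVT.L1) +
        (validCountEnd (k+1) (· = RVT.L2) + validCountEnd (k+1) (· = RVT.L3)) := by
      rw [lCount, validCountEnd_add (k+1) _ _ (by decide),
        validCountEnd_add (k+1) _ _ (by decide)]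
    refine ⟨by omega, by omega, by omega, ?_, by omega⟩
    rw [hLtot, hL1, hL2, hL3]
    omega
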